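/- arXiv:1908.00229 — 2 statements merged into one kernel-verified Lean document; each statement's English description precedes it below -/
import Mathlib

section
/- Let ω ∈ ℝ and let p, q be coprime integers with q ≥ 1 and |qω − p| < 1/q. Then for every M ∈ ℤ and every u ∈ ℝ, #{ n ∈ ℤ : M+1 ≤ n ≤ M+q and ‖nω − u‖ ≤ 1/(2q) } ≤ 3. -/
open MeasureTheory

noncomputable section

/-- The circle `ℝ/ℤ`; for `t : ℝ`, `‖(t : 𝕋)‖` is the distance from `t` to the nearest integer. -/
abbrev 𝕋 : Type := AddCircle (1 : ℝ)

/-- if `p/q` is a good rational approximation of `ω`, then in any window of `q`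
consecutive integers `n`, at most `3` of the points `nω - u` are `1/(2q)`-close to `ℤ`. -/
theorem statement_4 (ω : ℝ) (p q : ℤ) (hq : 1 ≤ q) (hpq : IsCoprime p q)
    (happ : |(q : ℝ) * ω - (p : ℝ)| < 1 / (q : ℝ)) (M : ℤ) (u : ℝ) :
    {n : ℤ | M + 1 ≤ n ∧ n ≤ M + q ∧
        ‖(((n : ℝ) * ω - u : ℝ) : 𝕋)‖ ≤ 1 / (2 * (q : ℝ))}.ncard ≤ 3 := by
  set S := {n : ℤ | M + 1 ≤ n ∧ n ≤ M + q ∧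
      ‖(((n : ℝ) * ω - u : ℝ) : 𝕋)‖ ≤ 1 / (2 * (q : ℝ))} with hS
  have hq0 : (0:ℝ) < (q:ℝ) := by exact_mod_cast hq
  -- the auxiliary map
  set y : ℤ → ℝ := fun n =>
    ((n - M - 1 : ℤ) : ℝ) * (p : ℝ) + (q:ℝ) * (((M : ℝ) + 1) * ω - u)
      - (q:ℝ) * (round ((n:ℝ) * ω - u) : ℤ) with hy
  -- bound : |y n| < 3/2 for n ∈ S
  have hbound : ∀ n ∈ S, |y n| < 3/2 := by
    intro n hn
    obtain ⟨h1, h2, h3⟩ := hn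
    set v : ℝ := (n:ℝ) * ω - u with hv
    have hnorm : ‖((v : ℝ) : 𝕋)‖ = |v - (round v : ℤ)| := UnitAddCircle.norm_eq
    have hclose : |v - (round v : ℤ)| ≤ 1 / (2 * (q:ℝ)) := by rw [← hnorm]; exact h3
    have hid : y n = (q:ℝ) * (v - (round v : ℤ)) +
        ((n - M - 1 : ℤ) : ℝ) * ((p:ℝ) - (q:ℝ) * ω) := by
      rw [hy, hv]; push_cast; ring
    have hr1 : ((M:ℝ) + 1) ≤ (n:ℝ) := by exact_mod_cast h1
    have hr2 : (n:ℝ) ≤ (M:ℝ) + (q:ℝ) := by exact_mod_cast h2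
    have hj1 : |((n - M - 1 : ℤ) : ℝ)| < (q:ℝ) := by
      rw [abs_lt]
      constructor
      · push_cast; linarith
      · push_cast; linarith
    have hterm2 : |((n - M - 1 : ℤ) : ℝ)| * |(p:ℝ) - (q:ℝ) * ω| < 1 := by
      have h4 : |(p:ℝ) - (q:ℝ) * ω| < 1 / (q:ℝ) := by rwa [abs_sub_comm]
      have := mul_lt_mul'' hj1 h4 (abs_nonneg _) (abs_nonneg _)
      calc |((n - M - 1 : ℤ) : ℝ)| * |(p:ℝ) - (q:ℝ) * ω| < (q:ℝ) * (1 / (q:ℝ)) := this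
        _ = 1 := by field_simp
    have hterm1 : (q:ℝ) * |v - (round v : ℤ)| ≤ 1/2 := by
      calc (q:ℝ) * |v - (round v : ℤ)| ≤ (q:ℝ) * (1 / (2 * (q:ℝ))) :=
            mul_le_mul_of_nonneg_left hclose hq0.le
        _ = 1/2 := by field_simp
    calc |y n| ≤ |(q:ℝ) * (v - (round v : ℤ))| +
          |((n - M - 1 : ℤ) : ℝ) * ((p:ℝ) - (q:ℝ) * ω)| := by rw [hid]; exact abs_add_le _ _
      _ = (q:ℝ) * |v - (round v : ℤ)| +
          |((n - M - 1 : ℤ) : ℝ)| * |(p:ℝ) - (q:ℝ) * ω| := by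
            rw [abs_mul, abs_mul, abs_of_pos hq0]
      _ < 1/2 + 1 := by linarith
      _ = 3/2 := by norm_num
  -- gap : distinct points have |y n - y n'| ≥ 1
  have hgap : ∀ n ∈ S, ∀ n' ∈ S, n ≠ n' → 1 ≤ |y n - y n'| := by
    intro n hn n' hn' hne
    set R : ℤ := round ((n:ℝ) * ω - u) - round ((n':ℝ) * ω - u) with hR
    set k : ℤ := (n - n') * p - q * R with hk
    have hcast : y n - y n' = (k : ℝ) := by rw [hy, hk, hR]; push_cast; ring
    have hk0 : k ≠ 0 := by
      intro h
      have heq : (n - n') * p = q * R := by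
        have h' : (n - n') * p - q * R = 0 := h
        linarith
      have hdvd : q ∣ (n - n') * p := ⟨R, heq⟩
      have hdvd' : q ∣ (n - n') := hpq.symm.dvd_of_dvd_mul_right hdvd
      have habs : |n - n'| < q := by
        rw [abs_lt]
        constructor
        · linarith [hn.1, hn'.2.1]
        · linarith [hn.2.1, hn'.1]
      obtain ⟨t, ht⟩ := hdvd'
      have ht0 : t = 0 := by
        by_contra ht0
        have h5 : q ≤ |q * t| := by
          rw [abs_mul, abs_of_pos (by linarith : (0:ℤ) < q)]
          nlinarith [Int.one_le_abs ht0, abs_nonneg t]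
        rw [← ht] at h5
        linarith
      rw [ht0, mul_zero] at ht
      exact hne (by linarith)
    have : (1:ℝ) ≤ |(k:ℝ)| := by
      rw [← Int.cast_abs]
      exact_mod_cast Int.one_le_abs hk0
    rwa [hcast]
  -- finiteness
  have hfin : S.Finite := (Set.finite_Icc (M+1) (M+q)).subset (fun n hn => ⟨hn.1, hn.2.1⟩)
  -- injectivity of the floor map
  have hinj : Set.InjOn (fun n => ⌊y n + 3/2⌋) S := by
    intro n hn n' hn' h
    by_contra hne
    have habs := Int.abs_sub_lt_one_of_floor_eq_floor (h : ⌊y n + 3/2⌋ = ⌊y n' + 3/2⌋)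
    rw [show (y n + 3/2) - (y n' + 3/2) = y n - y n' by ring] at habs
    linarith [hgap n hn n' hn' hne, habs]
  -- image contained in Icc 0 2
  have himg : (fun n => ⌊y n + 3/2⌋) '' S ⊆ Set.Icc (0:ℤ) 2 := by
    rintro _ ⟨n, hn, rfl⟩
    have hb := hbound n hn
    rw [abs_lt] at hb
    constructor
    · rw [Int.le_floor]; push_cast; linarith [hb.1]
    · rw [show (2:ℤ) = 3 - 1 by ring, Int.le_sub_one_iff, Int.floor_lt]
      push_cast; linarith [hb.2]
  calc S.ncard = ((fun n => ⌊y n + 3/2⌋) '' S).ncard := (Set.ncard_image_of_injOn hinj).symm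
    _ ≤ (Set.Icc (0:ℤ) 2).ncard := Set.ncard_le_ncard himg (Set.finite_Icc _ _)
    _ = 3 := by rw [← Finset.coe_Icc, Set.ncard_coe_finset]; rfl
end
end

section
/- Let C₀ > 0 and ρ ∈ (0,1). There exists M₀ = M₀(C₀, ρ) such that the following holds for every integer M ≥ M₀. Let H : ℤ × ℤ → ℂ satisfy |H(m,n)| ≤ e^{−|m−n|} for all m ≠ n, let E ∈ ℝ, and let ξ : ℤ → ℂ satisfy |ξ_n| ≤ C₀(1+|n|) for all n and the pointwise eigenvalue equation Σ_{n∈ℤ} H(m,n) ξ_n = E ξ_m for all m ∈ ℤ (the series converging absolutely). Let n₀ ∈ ℤ with |n₀| ≤ e^{M/1000}, and suppose the matrix (H(m,n) − E δ_{mn})_{m,n ∈ [n₀−M, n₀+M]} is invertible with inverse G satisfying |G(m,n)| < e^{M^{1−ρ}} for all m,n ∈ [n₀−M, n₀+M] and additionally |G(m,n)| < e^{M^{1−ρ} − |m−n|/100} when |m−n| > M/10. Then |ξ_{n₀}| < e^{−M/200}. -/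
open MeasureTheory

noncomputable section

/-- Restriction of an infinite matrix (a kernel on `ℤ`) to a finite set of sites. -/
def subMat (A : ℤ → ℤ → ℂ) (I : Finset ℤ) : Matrix I I ℂ := fun m n => A (m : ℤ) (n : ℤ)

/-- The kernel `H - E δ`. -/
def kerE (H : ℤ → ℤ → ℂ) (E : ℝ) : ℤ → ℤ → ℂ :=
  fun m n => H m n - if m = n then (E : ℂ) else 0

open Filter

lemma aux_int_exp_sum : Summable (fun k : ℤ => Real.exp (-|(k : ℝ)| / 4)) ∧
    ∑' k : ℤ, Real.exp (-|(k : ℝ)| / 4) ≤ 10 := by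
  set r : ℝ := Real.exp (-(1/4)) with hr
  have hr0 : (0:ℝ) ≤ r := (Real.exp_pos _).le
  have hr1 : r < 1 := by
    rw [hr, Real.exp_lt_one_iff]; norm_num
  have hgeo : HasSum (fun n : ℕ => r ^ n) (1 - r)⁻¹ := hasSum_geometric_of_lt_one hr0 hr1
  have h1 : HasSum (fun n : ℕ => Real.exp (-|((n : ℤ) : ℝ)| / 4)) (1 - r)⁻¹ := by
    convert hgeo using 2 with n
    rw [hr, ← Real.exp_nat_mul]
    congr 1
    rw [abs_of_nonneg (by positivity : (0:ℝ) ≤ ((n:ℤ):ℝ))]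
    push_cast; ring
  have h2 : HasSum (fun n : ℕ => Real.exp (-|((-(n+1) : ℤ) : ℝ)| / 4)) (r * (1 - r)⁻¹) := by
    have heq : (fun n : ℕ => Real.exp (-|((-(n+1) : ℤ) : ℝ)| / 4)) = fun n : ℕ => r * r ^ n := by
      funext n
      rw [hr, ← Real.exp_nat_mul, ← Real.exp_add]
      have h1 : ((-(n+1:ℤ) : ℤ) : ℝ) = -((n:ℝ)+1) := by push_cast; ring
      rw [h1, abs_neg, abs_of_nonneg (by positivity)]
      ring_nf
    rw [heq]
    exact hgeo.mul_left r
  have hs : HasSum (fun k : ℤ => Real.exp (-|(k : ℝ)| / 4)) ((1 - r)⁻¹ + r * (1 - r)⁻¹) :=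
    HasSum.of_nat_of_neg_add_one h1 h2
  refine ⟨hs.summable, ?_⟩
  rw [hs.tsum_eq]
  have hr45 : r ≤ 4/5 := by
    have h := Real.add_one_le_exp (1/4 : ℝ)
    have h' : r = (Real.exp (1/4))⁻¹ := by rw [hr, ← Real.exp_neg]
    rw [h', inv_le_comm₀ (Real.exp_pos _) (by norm_num)]
    linarith
  have h1r : (0:ℝ) < 1 - r := by linarith
  have key : (1 - r) * (1 - r)⁻¹ = 1 := mul_inv_cancel₀ (ne_of_gt h1r)
  have hu0 : (0:ℝ) ≤ (1 - r)⁻¹ := by positivity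
  nlinarith [key, hr45, hu0, hr0]

lemma aux_lin_le_exp {a t : ℝ} (ha : 0 ≤ a) (ht : 0 ≤ t) :
    a + t ≤ (a + 1) * Real.exp (t / 2) := by
  have h4 : Real.exp (t/2) = Real.exp (t/4) * Real.exp (t/4) := by
    rw [← Real.exp_add]; ring_nf
  have he := Real.add_one_le_exp (t/4)
  have hsq : (t/4+1)*(t/4+1) ≤ Real.exp (t/2) := by
    rw [h4]; nlinarith
  have h2 : a + t ≤ (a+1) * ((t/4+1)*(t/4+1)) := by
    nlinarith [sq_nonneg (1 - t/4), mul_nonneg ha (by positivity : (0:ℝ) ≤ t/2 + t^2/16)]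
  calc a + t ≤ (a+1) * ((t/4+1)*(t/4+1)) := h2
    _ ≤ (a + 1) * Real.exp (t / 2) := by
        apply mul_le_mul_of_nonneg_left hsq (by linarith)


/-- a polynomially bounded generalized eigenfunction is small at a site `n₀`
(with `|n₀| ≤ e^{M/1000}`) around which the Green function on `[n₀ - M, n₀ + M]` has good
bounds: `|ξ_{n₀}| < e^{-M/200}`. -/
theorem statement_18 (C₀ ρ : ℝ) (hC₀ : 0 < C₀) (hρ : 0 < ρ) (hρ' : ρ < 1) :
    ∃ M₀ : ℕ, ∀ M : ℕ, M₀ ≤ M →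
      ∀ H : ℤ → ℤ → ℂ,
        (∀ m n : ℤ, m ≠ n → ‖H m n‖ ≤ Real.exp (-|(m : ℝ) - (n : ℝ)|)) →
      ∀ E : ℝ, ∀ ξ : ℤ → ℂ,
        (∀ n : ℤ, ‖ξ n‖ ≤ C₀ * (1 + |(n : ℝ)|)) →
        (∀ m : ℤ, Summable (fun n => ‖H m n * ξ n‖) ∧
          ∑' n : ℤ, H m n * ξ n = (E : ℂ) * ξ m) →
      ∀ n₀ : ℤ, (|n₀| : ℝ) ≤ Real.exp ((M : ℝ) / 1000) →
        IsUnit (subMat (kerE H E) (Finset.Icc (n₀ - M) (n₀ + M))) →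
        (∀ m n : (Finset.Icc (n₀ - (M : ℤ)) (n₀ + (M : ℤ)) : Finset ℤ),
          ‖(subMat (kerE H E) (Finset.Icc (n₀ - M) (n₀ + M)))⁻¹ m n‖
            < Real.exp ((M : ℝ) ^ (1 - ρ))) →
        (∀ m n : (Finset.Icc (n₀ - (M : ℤ)) (n₀ + (M : ℤ)) : Finset ℤ),
          (M : ℝ) / 10 < |((m : ℤ) : ℝ) - ((n : ℤ) : ℝ)| →
          ‖(subMat (kerE H E) (Finset.Icc (n₀ - M) (n₀ + M)))⁻¹ m n‖
            < Real.exp ((M : ℝ) ^ (1 - ρ) - |((m : ℤ) : ℝ) - ((n : ℤ) : ℝ)| / 100)) →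
        ‖ξ n₀‖ < Real.exp (-(M : ℝ) / 200) := by
  -- the eventual smallness conditions on M
  have ev1 : ∀ᶠ M : ℕ in atTop, 2*(M:ℝ)+1 ≤ Real.exp ((M:ℝ)/1000) := by
    filter_upwards [eventually_ge_atTop 32000000] with M hM
    have hMr : (32000000 : ℝ) ≤ (M:ℝ) := by exact_mod_cast hM
    have h := Real.add_one_le_exp ((M:ℝ)/2000)
    have hx : Real.exp ((M:ℝ)/1000) = Real.exp ((M:ℝ)/2000) * Real.exp ((M:ℝ)/2000) := by
      rw [← Real.exp_add]; ring_nf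
    nlinarith [Real.exp_pos ((M:ℝ)/2000)]
  have ev2 : ∀ᶠ M : ℕ in atTop, 10*C₀ ≤ Real.exp ((M:ℝ)/2000) := by
    have ht : Tendsto (fun M : ℕ => Real.exp ((M:ℝ)/2000)) atTop atTop := by
      apply Real.tendsto_exp_atTop.comp
      exact (tendsto_natCast_atTop_atTop (R := ℝ)).atTop_div_const (by norm_num)
    exact ht.eventually_ge_atTop _
  have ev3 : ∀ᶠ M : ℕ in atTop, (M:ℝ)^(1-ρ) ≤ (M:ℝ)/1000 := by
    have ht : Tendsto (fun M : ℕ => (M:ℝ)^ρ) atTop atTop :=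
      (tendsto_rpow_atTop hρ).comp (tendsto_natCast_atTop_atTop (R := ℝ))
    filter_upwards [ht.eventually_ge_atTop 1000, eventually_ge_atTop 1] with M h1000 h1
    have hM0 : (0:ℝ) < M := by exact_mod_cast h1
    have hid : (M:ℝ)^(1-ρ) * (M:ℝ)^ρ = (M:ℝ) := by
      rw [← Real.rpow_add hM0]; simp
    have ha : (0:ℝ) ≤ (M:ℝ)^(1-ρ) := Real.rpow_nonneg hM0.le _
    nlinarith [mul_le_mul_of_nonneg_left h1000 ha]
  obtain ⟨M₀, hM₀⟩ := eventually_atTop.mp ((ev1.and (ev2.and ev3)).and (eventually_ge_atTop 1))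
  refine ⟨M₀, ?_⟩
  intro M hMM H hH E ξ hξ hSum n₀ hn₀ hUnit hG1 hG2
  obtain ⟨⟨h1, h2, h3⟩, h4⟩ := hM₀ M hMM
  have hM1 : (1:ℝ) ≤ (M:ℝ) := by exact_mod_cast h4
  set J : Finset ℤ := Finset.Icc (n₀ - (M:ℤ)) (n₀ + (M:ℤ)) with hJdef
  set A := subMat (kerE H E) J with hAdef
  have hn₀J : n₀ ∈ J := by
    rw [hJdef, Finset.mem_Icc]; omega
  -- summability of the eigen-equation series
  have hsumm : ∀ m : ℤ, Summable (fun n : ℤ => H m n * ξ n) := by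
    intro m
    apply Summable.of_norm
    simpa using (hSum m).1
  set v : ↥J → ℂ := fun m => ξ m with hvdef
  set b : ↥J → ℂ := fun m => -(∑' n : {n : ℤ // n ∉ J}, H m n * ξ n) with hbdef
  -- the finite-volume equation
  have hmv : A.mulVec v = b := by
    funext m
    obtain ⟨mz, hm⟩ := m
    have hsplit := Summable.sum_add_tsum_subtype_compl (hsumm mz) J
    have heig : ∑' n : ℤ, H mz n * ξ n = (E:ℂ) * ξ mz := (hSum mz).2
    have hsum2 : ∑ n : ↥J, (if mz = (n:ℤ) then (E:ℂ) else 0) * ξ n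
        = (E:ℂ) * ξ mz := by
      rw [Finset.sum_coe_sort J (fun n => (if mz = n then (E:ℂ) else 0) * ξ n)]
      simp only [ite_mul, zero_mul]
      rw [Finset.sum_ite_eq J mz (fun n => (E:ℂ) * ξ n)]
      simp [hm]
    have hsum1 : ∑ n : ↥J, H mz n * ξ n = ∑ n ∈ J, H mz n * ξ n :=
      Finset.sum_coe_sort J (fun n => H mz n * ξ n)
    show ∑ n : ↥J, kerE H E mz n * ξ n = _
    simp only [kerE, sub_mul, Finset.sum_sub_distrib, hsum1, hsum2]
    rw [hbdef]
    have : ∑ n ∈ J, H mz n * ξ n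
        = (E:ℂ) * ξ mz - ∑' n : {n : ℤ // n ∉ J}, H mz n * ξ n := by
      rw [← heig, ← hsplit]; ring
    rw [this]; ring
  have hvb : v = (A⁻¹).mulVec b := by
    rw [← hmv, Matrix.mulVec_mulVec,
      Matrix.nonsing_inv_mul A ((Matrix.isUnit_iff_isUnit_det A).mp hUnit),
      Matrix.one_mulVec]
  have hξn₀ : ξ n₀ = ∑ m : ↥J, (A⁻¹) ⟨n₀, hn₀J⟩ m * b m := by
    have h := congrFun hvb ⟨n₀, hn₀J⟩
    simpa [hvdef, Matrix.mulVec, dotProduct] using h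
  -- constants
  set K : ℝ := C₀ * (2 + |(n₀:ℝ)| + M) with hKdef
  have hK0 : 0 < K := by
    rw [hKdef]; positivity
  -- bound on the boundary term b
  have hb : ∀ (mz : ℤ) (hm : mz ∈ J),
      ‖b ⟨mz, hm⟩‖ ≤ 10 * K * Real.exp ((|(mz:ℝ) - (n₀:ℝ)| - M)/4) := by
    intro mz hm
    set dm : ℝ := |(mz:ℝ) - (n₀:ℝ)| with hdmdef
    have hmIcc := Finset.mem_Icc.mp hm
    have hdm : dm ≤ M := by
      rw [hdmdef, abs_le]
      constructor
      · have : (n₀:ℝ) - M ≤ (mz:ℝ) := by exact_mod_cast hmIcc.1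
        linarith
      · have : (mz:ℝ) ≤ (n₀:ℝ) + M := by exact_mod_cast hmIcc.2
        linarith
    have hdm0 : 0 ≤ dm := abs_nonneg _
    -- per-term bound on exterior sites
    have hterm : ∀ n : {n : ℤ // n ∉ J},
        ‖H mz (n:ℤ) * ξ (n:ℤ)‖ ≤
          (K * Real.exp ((dm - M)/4)) * Real.exp (-|(mz:ℝ) - ((n:ℤ):ℝ)|/4) := by
      rintro ⟨n, hn⟩
      have hne : mz ≠ n := by rintro rfl; exact hn hm
      set t : ℝ := |(mz:ℝ) - (n:ℝ)| with htdef
      have ht0 : (0:ℝ) ≤ t := abs_nonneg _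
      have hout : n ≤ n₀ - M - 1 ∨ n₀ + M + 1 ≤ n := by
        rw [hJdef, Finset.mem_Icc] at hn; omega
      have hnn₀ : (M:ℝ) + 1 ≤ |(n:ℝ) - (n₀:ℝ)| := by
        rcases hout with h | h
        · have : (n:ℝ) ≤ (n₀:ℝ) - M - 1 := by exact_mod_cast h
          rw [abs_sub_comm]
          calc (M:ℝ) + 1 ≤ (n₀:ℝ) - n := by linarith
            _ ≤ |(n₀:ℝ) - n| := le_abs_self _
        · have : (n₀:ℝ) + M + 1 ≤ (n:ℝ) := by exact_mod_cast h
          calc (M:ℝ) + 1 ≤ (n:ℝ) - n₀ := by linarith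
            _ ≤ |(n:ℝ) - n₀| := le_abs_self _
      have htri : |(n:ℝ) - (n₀:ℝ)| ≤ t + dm := by
        calc |(n:ℝ) - (n₀:ℝ)| ≤ |(n:ℝ) - (mz:ℝ)| + |(mz:ℝ) - (n₀:ℝ)| := abs_sub_le _ _ _
          _ = t + dm := by rw [htdef, hdmdef, abs_sub_comm (n:ℝ) (mz:ℝ)]
      have ht : (M:ℝ) + 1 - dm ≤ t := by linarith
      have hnabs : 1 + |(n:ℝ)| ≤ (1 + |(n₀:ℝ)| + M) + t := by
        have htr2 : |(n:ℝ)| - |(n₀:ℝ)| ≤ |(n:ℝ) - (n₀:ℝ)| := abs_sub_abs_le_abs_sub _ _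
        linarith
      have hHb : ‖H mz n‖ ≤ Real.exp (-t) := hH mz n hne
      have hξb : ‖ξ n‖ ≤ C₀ * (1 + |(n:ℝ)|) := hξ n
      rw [norm_mul]
      calc ‖H mz n‖ * ‖ξ n‖
          ≤ Real.exp (-t) * (C₀ * (1 + |(n:ℝ)|)) := by
            apply mul_le_mul hHb hξb (norm_nonneg _) (Real.exp_pos _).le
        _ ≤ Real.exp (-t) * (C₀ * ((1 + |(n₀:ℝ)| + M) + t)) := by
            apply mul_le_mul_of_nonneg_left _ (Real.exp_pos _).le
            apply mul_le_mul_of_nonneg_left hnabs hC₀.le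
        _ ≤ Real.exp (-t) * (C₀ * ((2 + |(n₀:ℝ)| + M) * Real.exp (t/2))) := by
            apply mul_le_mul_of_nonneg_left _ (Real.exp_pos _).le
            apply mul_le_mul_of_nonneg_left _ hC₀.le
            have := aux_lin_le_exp (a := 1 + |(n₀:ℝ)| + M) (t := t)
              (by positivity) ht0
            calc (1 + |(n₀:ℝ)| + M) + t ≤ ((1 + |(n₀:ℝ)| + M) + 1) * Real.exp (t/2) :=
                this
              _ = (2 + |(n₀:ℝ)| + M) * Real.exp (t/2) := by ring
        _ = K * Real.exp (-(t/2)) := by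
            rw [hKdef, show Real.exp (-(t/2)) = Real.exp (-t) * Real.exp (t/2) by
              rw [← Real.exp_add]; ring_nf]
            ring
        _ = K * (Real.exp (-(t/4)) * Real.exp (-(t/4))) := by
            rw [show Real.exp (-(t/4)) * Real.exp (-(t/4)) = Real.exp (-(t/2)) by
              rw [← Real.exp_add]; ring_nf]
        _ ≤ K * (Real.exp ((dm - M)/4) * Real.exp (-(t/4))) := by
            apply mul_le_mul_of_nonneg_left _ hK0.le
            apply mul_le_mul_of_nonneg_right _ (Real.exp_pos _).le
            apply Real.exp_le_exp.mpr
            linarith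
        _ = (K * Real.exp ((dm - M)/4)) * Real.exp (-|(mz:ℝ) - ((n:ℤ):ℝ)|/4) := by
            rw [← htdef]; ring_nf
    -- summability facts
    have hbsum : Summable (fun n : {n : ℤ // n ∉ J} => ‖H mz (n:ℤ) * ξ (n:ℤ)‖) := by
      have h' : Summable (fun n : ℤ => ‖H mz n * ξ n‖) := by
        simpa using (hSum mz).1
      exact h'.subtype _
    have hgsum0 : Summable (fun n : ℤ => Real.exp (-|(mz:ℝ) - (n:ℝ)|/4)) := by
      apply (Equiv.addRight mz).summable_iff.mp
      have heq : ((fun n : ℤ => Real.exp (-|(mz:ℝ) - (n:ℝ)|/4)) ∘ ⇑(Equiv.addRight mz))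
          = fun k : ℤ => Real.exp (-|(k:ℝ)|/4) := by
        funext k
        simp only [Function.comp_apply, Equiv.coe_addRight]
        congr 1
        have : (mz:ℝ) - (((k + mz) : ℤ):ℝ) = -(k:ℝ) := by push_cast; ring
        rw [this, abs_neg]
      rw [heq]
      exact aux_int_exp_sum.1
    have hgt : ∑' n : ℤ, Real.exp (-|(mz:ℝ) - (n:ℝ)|/4) ≤ 10 := by
      rw [← Equiv.tsum_eq (Equiv.addRight mz) (fun n : ℤ => Real.exp (-|(mz:ℝ) - (n:ℝ)|/4))]
      have heq : (fun k : ℤ => Real.exp (-|(mz:ℝ) - (((Equiv.addRight mz) k : ℤ):ℝ)|/4))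
          = fun k : ℤ => Real.exp (-|(k:ℝ)|/4) := by
        funext k
        congr 1
        have h1 : ((Equiv.addRight mz) k : ℤ) = k + mz := rfl
        rw [h1]
        have : (mz:ℝ) - (((k + mz) : ℤ):ℝ) = -(k:ℝ) := by push_cast; ring
        rw [this, abs_neg]
      calc ∑' (k : ℤ), Real.exp (-|(mz:ℝ) - (((Equiv.addRight mz) k : ℤ):ℝ)|/4)
          = ∑' (k : ℤ), Real.exp (-|(k:ℝ)|/4) := by rw [heq]
        _ ≤ 10 := aux_int_exp_sum.2
    -- assemble
    have habs : ‖b ⟨mz, hm⟩‖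
        = ‖∑' n : {n : ℤ // n ∉ J}, H mz (n:ℤ) * ξ (n:ℤ)‖ := by
      rw [hbdef]
      simp
    rw [habs]
    calc ‖∑' n : {n : ℤ // n ∉ J}, H mz (n:ℤ) * ξ (n:ℤ)‖
        ≤ ∑' n : {n : ℤ // n ∉ J}, ‖H mz (n:ℤ) * ξ (n:ℤ)‖ := norm_tsum_le_tsum_norm hbsum
      _ ≤ ∑' n : ℤ, (K * Real.exp ((dm - M)/4)) * Real.exp (-|(mz:ℝ) - (n:ℝ)|/4) := by
          apply Summable.tsum_le_tsum_of_inj (fun n : {n : ℤ // n ∉ J} => (n:ℤ))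
            Subtype.val_injective (fun c _ => by positivity) hterm hbsum
            (hgsum0.mul_left _)
      _ = (K * Real.exp ((dm - M)/4)) * ∑' n : ℤ, Real.exp (-|(mz:ℝ) - (n:ℝ)|/4) :=
          tsum_mul_left
      _ ≤ (K * Real.exp ((dm - M)/4)) * 10 := by
          apply mul_le_mul_of_nonneg_left hgt (by positivity)
      _ = 10 * K * Real.exp ((dm - M)/4) := by ring
  -- combine with Green function bounds
  set X : ℝ := (M:ℝ)^(1-ρ) - (M:ℝ)/100 with hXdef
  have hterm2 : ∀ m : ↥J,
      ‖(A⁻¹) ⟨n₀, hn₀J⟩ m * b m‖ ≤ 10 * K * Real.exp X := by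
    rintro ⟨mz, hm⟩
    rw [norm_mul]
    set dm : ℝ := |(mz:ℝ) - (n₀:ℝ)| with hdmdef
    have hmIcc := Finset.mem_Icc.mp hm
    have hdm : dm ≤ M := by
      rw [hdmdef, abs_le]
      constructor
      · have : (n₀:ℝ) - M ≤ (mz:ℝ) := by exact_mod_cast hmIcc.1
        linarith
      · have : (mz:ℝ) ≤ (n₀:ℝ) + M := by exact_mod_cast hmIcc.2
        linarith
    have hb' := hb mz hm
    have habs' : |((n₀:ℤ):ℝ) - ((mz:ℤ):ℝ)| = dm := by
      rw [hdmdef, abs_sub_comm]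
    by_cases hcase : (M:ℝ)/10 < |((n₀:ℤ):ℝ) - ((mz:ℤ):ℝ)|
    · have hG := hG2 ⟨n₀, hn₀J⟩ ⟨mz, hm⟩ hcase
      rw [habs'] at hG
      calc ‖(A⁻¹) ⟨n₀, hn₀J⟩ ⟨mz, hm⟩‖ * ‖b ⟨mz, hm⟩‖
          ≤ Real.exp ((M:ℝ)^(1-ρ) - dm/100) * (10 * K * Real.exp ((dm - M)/4)) := by
            apply mul_le_mul hG.le hb' (norm_nonneg _) (Real.exp_pos _).le
        _ = 10 * K * Real.exp (((M:ℝ)^(1-ρ) - dm/100) + (dm - M)/4) := by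
            rw [Real.exp_add]; ring
        _ ≤ 10 * K * Real.exp X := by
            apply mul_le_mul_of_nonneg_left _ (by positivity)
            apply Real.exp_le_exp.mpr
            rw [hXdef]
            linarith
    · push_neg at hcase
      rw [habs'] at hcase
      have hG := hG1 ⟨n₀, hn₀J⟩ ⟨mz, hm⟩
      calc ‖(A⁻¹) ⟨n₀, hn₀J⟩ ⟨mz, hm⟩‖ * ‖b ⟨mz, hm⟩‖
          ≤ Real.exp ((M:ℝ)^(1-ρ)) * (10 * K * Real.exp ((dm - M)/4)) := by
            apply mul_le_mul hG.le hb' (norm_nonneg _) (Real.exp_pos _).le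
        _ = 10 * K * Real.exp ((M:ℝ)^(1-ρ) + (dm - M)/4) := by
            rw [Real.exp_add]; ring
        _ ≤ 10 * K * Real.exp X := by
            apply mul_le_mul_of_nonneg_left _ (by positivity)
            apply Real.exp_le_exp.mpr
            rw [hXdef]
            linarith
  -- cardinality
  have hcard : (Fintype.card ↥J : ℝ) = 2*(M:ℝ)+1 := by
    rw [Fintype.card_coe, hJdef, Int.card_Icc]
    have : (n₀ + (M:ℤ) + 1 - (n₀ - (M:ℤ))).toNat = 2*M+1 := by omega
    rw [this]; push_cast; ring
  -- final estimate
  have hKb : 2 + |(n₀:ℝ)| + (M:ℝ) ≤ Real.exp ((M:ℝ)/500) := by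
    have hn₀' : |(n₀:ℝ)| ≤ Real.exp ((M:ℝ)/1000) := hn₀
    have hx : Real.exp ((M:ℝ)/500) = Real.exp ((M:ℝ)/1000) * Real.exp ((M:ℝ)/1000) := by
      rw [← Real.exp_add]; ring_nf
    nlinarith [Real.exp_pos ((M:ℝ)/1000), h1, hM1]
  calc ‖ξ n₀‖
      = ‖∑ m : ↥J, (A⁻¹) ⟨n₀, hn₀J⟩ m * b m‖ := by rw [hξn₀]
    _ ≤ ∑ m : ↥J, ‖(A⁻¹) ⟨n₀, hn₀J⟩ m * b m‖ :=
        norm_sum_le _ _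
    _ ≤ ∑ _m : ↥J, 10 * K * Real.exp X :=
        Finset.sum_le_sum (fun m _ => hterm2 m)
    _ = (Fintype.card ↥J : ℝ) * (10 * K * Real.exp X) := by
        rw [Finset.sum_const, Finset.card_univ, nsmul_eq_mul]
    _ = (2*(M:ℝ)+1) * ((10*C₀) * ((2 + |(n₀:ℝ)| + M) * Real.exp X)) := by
        rw [hcard, hKdef]; ring
    _ ≤ Real.exp ((M:ℝ)/1000) * (Real.exp ((M:ℝ)/2000) *
          (Real.exp ((M:ℝ)/500) * Real.exp ((M:ℝ)/1000 - (M:ℝ)/100))) := by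
        have hXb : Real.exp X ≤ Real.exp ((M:ℝ)/1000 - (M:ℝ)/100) := by
          apply Real.exp_le_exp.mpr
          rw [hXdef]; linarith
        gcongr
    _ = Real.exp ((M:ℝ)/1000 + ((M:ℝ)/2000 + ((M:ℝ)/500 + ((M:ℝ)/1000 - (M:ℝ)/100)))) := by
        rw [← Real.exp_add, ← Real.exp_add, ← Real.exp_add]
    _ < Real.exp (-(M:ℝ)/200) := by
        apply Real.exp_lt_exp.mpr
        linarith
end
end
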